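/- If V(G) is a verbal subgroup of a group G and H is a verbally closed subgroup of G, then H ∩ V(G) = V(H), the verbal subgroup of H corresponding to the same set of words. -/

import Mathlib

/-- `H` is verbally closed in `G`: every equation `w(x₁,x₂,…) = h` with `h ∈ H`,
`w` a word in the free group, that has a solution in `G` has a solution in `H`. -/
def VerballyClosed {G : Type*} [Group G] (H : Subgroup G) : Prop :=
  ∀ (w : FreeGroup ℕ) (h : G), h ∈ H → (∃ g : ℕ → G, FreeGroup.lift g w = h) →
    ∃ k : ℕ → G, (∀ n, k n ∈ H) ∧ FreeGroup.lift k w = h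

/-- The verbal subgroup of `G` corresponding to a set of words `W`: the subgroup
generated by all values of the words of `W` in `G`. -/
def verbalSubgroup (W : Set (FreeGroup ℕ)) (G : Type*) [Group G] : Subgroup G :=
  Subgroup.closure {x : G | ∃ w ∈ W, ∃ g : ℕ → G, FreeGroup.lift g w = x}

lemma lift_map_aux {α β : Type*} {G : Type*} [Group G] (f : α → β) (k : β → G)
    (w : FreeGroup α) :
    FreeGroup.lift k (FreeGroup.map f w) = FreeGroup.lift (k ∘ f) w := by
  have : (FreeGroup.lift k).comp (FreeGroup.map f) = FreeGroup.lift (k ∘ f) := by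
    apply FreeGroup.ext_hom
    intro a
    simp
  exact DFunLike.congr_fun this w

lemma subtype_lift_aux {G : Type*} [Group G] (H : Subgroup G) (k : ℕ → H)
    (w : FreeGroup ℕ) :
    (H.subtype) (FreeGroup.lift k w) = FreeGroup.lift (fun n => (k n : G)) w := by
  have : (H.subtype).comp (FreeGroup.lift k) = FreeGroup.lift (fun n => (k n : G)) := by
    apply FreeGroup.ext_hom
    intro a
    simp
  exact DFunLike.congr_fun this w

/-- If `V(G)` is a verbal subgroup of `G` and `H` is verbally closed in `G`,
then `H ∩ V(G) = V(H)` (the verbal subgroup of `H` for the same set of words,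
viewed inside `G` via the inclusion). -/
theorem inf_verbal_eq_verbal {G : Type*} [Group G] (H : Subgroup G)
    (hvc : VerballyClosed H) (W : Set (FreeGroup ℕ)) :
    H ⊓ verbalSubgroup W G = (verbalSubgroup W ↥H).map H.subtype := by
  classical
  apply le_antisymm
  · rintro x ⟨hxH, hxV⟩
    -- x is a product of values and inverses of values
    have hx' : x ∈ Submonoid.closure
        ({y : G | ∃ w ∈ W, ∃ g : ℕ → G, FreeGroup.lift g w = y} ∪
         {y : G | ∃ w ∈ W, ∃ g : ℕ → G, FreeGroup.lift g w = y}⁻¹) := by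
      rw [← Subgroup.closure_toSubmonoid]
      exact hxV
    obtain ⟨l, hl, hlprod⟩ := Submonoid.exists_list_of_mem_closure hx'
    set n := l.length with hn
    have key : ∀ i : Fin n, ∃ w g, w ∈ W ∧
        (FreeGroup.lift g w = l.get i ∨ FreeGroup.lift g w = (l.get i)⁻¹) := by
      intro i
      rcases hl (l.get i) (by simp [l.get_mem i]) with h | h
      · obtain ⟨w, hw, g, hg⟩ := h
        exact ⟨w, g, hw, Or.inl hg⟩
      · obtain ⟨w, hw, g, hg⟩ := h
        exact ⟨w, g, hw, Or.inr hg⟩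
    choose w g hwW hval using key
    -- build the big word on disjoint variables
    set v : Fin n → FreeGroup ℕ := fun i =>
      if FreeGroup.lift (g i) (w i) = l.get i then
        FreeGroup.map (Nat.pair i) (w i)
      else (FreeGroup.map (Nat.pair i) (w i))⁻¹ with hv
    set u : FreeGroup ℕ := (List.ofFn v).prod with hu
    set g' : ℕ → G := fun m =>
      if h : (Nat.unpair m).1 < n then g ⟨(Nat.unpair m).1, h⟩ (Nat.unpair m).2
      else 1 with hg'
    have hcomp : ∀ i : Fin n, (g' ∘ Nat.pair i) = g i := by
      intro i
      funext m
      simp only [hg', Function.comp_apply, Nat.unpair_pair]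
      exact dif_pos i.isLt
    have hgu : FreeGroup.lift g' u = x := by
      rw [hu, map_list_prod, List.map_ofFn]
      have : ∀ i : Fin n, FreeGroup.lift g' (v i) = l.get i := by
        intro i
        by_cases hc : FreeGroup.lift (g i) (w i) = l.get i
        · simp only [hv, if_pos hc]
          rw [lift_map_aux, hcomp i, hc]
        · simp only [hv, if_neg hc]
          rw [map_inv, lift_map_aux, hcomp i]
          rcases hval i with h | h
          · exact absurd h hc
          · rw [h, inv_inv]
      simp only [Function.comp_def, this]
      rw [List.ofFn_get]
      exact hlprod
    obtain ⟨k, hkH, hku⟩ := hvc u x hxH ⟨g', hgu⟩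
    -- now x is a product of values in H
    set k' : ℕ → H := fun m => ⟨k m, hkH m⟩ with hk'
    have hfac : ∀ i : Fin n, FreeGroup.lift k (v i) ∈
        (verbalSubgroup W ↥H).map H.subtype := by
      intro i
      have hmem : FreeGroup.lift (k' ∘ Nat.pair i) (w i) ∈ verbalSubgroup W ↥H :=
        Subgroup.subset_closure ⟨w i, hwW i, k' ∘ Nat.pair i, rfl⟩
      have heq : H.subtype (FreeGroup.lift (k' ∘ Nat.pair i) (w i)) =
          FreeGroup.lift (k ∘ Nat.pair i) (w i) := by
        rw [subtype_lift_aux]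
        rfl
      by_cases hc : FreeGroup.lift (g i) (w i) = l.get i
      · simp only [hv, if_pos hc]
        rw [lift_map_aux, ← heq]
        exact ⟨_, hmem, rfl⟩
      · simp only [hv, if_neg hc]
        rw [map_inv, lift_map_aux, ← heq]
        exact ⟨_, inv_mem hmem, by simp⟩
    rw [← hku, hu, map_list_prod, List.map_ofFn]
    apply Subgroup.list_prod_mem
    intro y hy
    rw [List.mem_ofFn] at hy
    obtain ⟨i, rfl⟩ := hy
    exact hfac i
  · rw [verbalSubgroup, MonoidHom.map_closure]
    apply le_inf
    · rw [Subgroup.closure_le]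
      rintro y ⟨z, _, rfl⟩
      exact z.2
    · rw [verbalSubgroup]
      apply Subgroup.closure_mono
      rintro y ⟨z, ⟨w, hw, g, hg⟩, rfl⟩
      exact ⟨w, hw, fun n => (g n : G), by rw [← subtype_lift_aux, hg]⟩
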